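/- Let s be a sequence and let i, j, k ∈ supp(s) be three distinct neurons with c_k(s) = 1 (neuron k spikes exactly once in s). Then b_{ik}(s)·(1 - b_{jk}(s)) ≤ b_{ij}(s) ≤ 1 - b_{jk}(s)·(1 - b_{ik}(s)). -/

import Mathlib

open Finset

namespace NeuralSeq

/-- The bias count `c_{ij}(s)`: number of index pairs `k < k'` with `s_k = i` and `s_{k'} = j`. -/
def biasCount {n : ℕ} : List (Fin n) → Fin n → Fin n → ℕ
  | [], _, _ => 0
  | a :: t, i, j => (if a = i then t.count j else 0) + biasCount t i j

/-- The skew bias `β_{ij}(s)`. -/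
noncomputable def skewBias {n : ℕ} (s : List (Fin n)) (i j : Fin n) : ℝ :=
  if 0 < s.count i ∧ 0 < s.count j then
    ((biasCount s i j : ℝ) - (biasCount s j i : ℝ)) / ((s.count i : ℝ) * (s.count j : ℝ))
  else 0

/-- The skew-bias matrix `B_skew(s)`. -/
noncomputable def Bskew {n : ℕ} (s : List (Fin n)) : Matrix (Fin n) (Fin n) ℝ :=
  Matrix.of fun i j => skewBias s i j

/-- The probability bias `b_{ij}(s)` (meaningful when `i, j ∈ supp(s)`). -/
noncomputable def probBias {n : ℕ} (s : List (Fin n)) (i j : Fin n) : ℝ :=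
  (biasCount s i j : ℝ) / ((s.count i : ℝ) * (s.count j : ℝ))

/-- The (unnormalized) center of mass `com_i(s)`, with 1-based indexing. -/
noncomputable def com {n : ℕ} (s : List (Fin n)) (i : Fin n) : ℝ :=
  if 0 < s.count i then
    (∑ k : Fin s.length, if s.get k = i then ((k : ℕ) + 1 : ℝ) else 0) / (s.count i : ℝ)
  else ((s.length : ℝ) + 1) / 2

/-- The normalized center of mass `γ_i(s)`. -/
noncomputable def gamma {n : ℕ} (s : List (Fin n)) (i : Fin n) : ℝ :=
  (2 * com s i - 1) / (s.length : ℝ) - 1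

/-- The firing rate `ρ_i(s)`. -/
noncomputable def rate {n : ℕ} (s : List (Fin n)) (i : Fin n) : ℝ :=
  (s.count i : ℝ) / (s.length : ℝ)

/-- A sequence is pure if for every pair of distinct active neurons, all spikes of one
precede all spikes of the other (equivalently, `c_{ij}(s) = 0` or `c_{ji}(s) = 0`). -/
def IsPure {n : ℕ} (s : List (Fin n)) : Prop :=
  ∀ i j : Fin n, i ≠ j → 0 < s.count i → 0 < s.count j →
    biasCount s i j = 0 ∨ biasCount s j i = 0

/-- The subsequence `s_I` of `s` given by an index set `I`. -/
def subseqOf {n : ℕ} (s : List (Fin n)) (I : Finset (Fin s.length)) : List (Fin n) :=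
  ((List.finRange s.length).filter (fun k => decide (k ∈ I))).map s.get

/-- The shuffling `s^π` of `s` by a permutation `π` of its index set. -/
def shuffle {n : ℕ} (s : List (Fin n)) (π : Equiv.Perm (Fin s.length)) : List (Fin n) :=
  (List.finRange s.length).map (fun k => s.get (π k))

/-- The order-`m` bias count `c_v(s)`: the number of subsequences of `s` equal to `v`. -/
def orderCount {n : ℕ} : List (Fin n) → List (Fin n) → ℕ
  | _, [] => 1
  | [], _ :: _ => 0
  | a :: t, v :: vs => (if a = v then orderCount t vs else 0) + orderCount t (v :: vs)

lemma biasCount_zero_of_count {n : ℕ} (s : List (Fin n)) (i j : Fin n)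
    (h : s.count j = 0) : biasCount s i j = 0 := by
  induction s with
  | nil => rfl
  | cons a t ih =>
    simp only [List.count_cons, beq_iff_eq] at h
    have h1 : t.count j = 0 := by omega
    have h2 : a ≠ j := by intro hh; simp [hh] at h
    simp [biasCount, ih h1, h1]

lemma biasCount_append {n : ℕ} (u v : List (Fin n)) (i j : Fin n) :
    biasCount (u ++ v) i j = biasCount u i j + biasCount v i j + u.count i * v.count j := by
  induction u with
  | nil => simp [biasCount]
  | cons a t ih =>
    simp only [List.cons_append, biasCount, ih, List.count_append, List.count_cons,
      beq_iff_eq]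
    by_cases h : a = i
    · subst h
      simp only [eq_self_iff_true, if_true, List.append_eq, List.count_append]
      ring
    · simp only [h, if_neg h, if_false, List.append_eq] at *
      ring

lemma biasCount_add_symm {n : ℕ} (s : List (Fin n)) (i j : Fin n) (hij : i ≠ j) :
    biasCount s i j + biasCount s j i = s.count i * s.count j := by
  induction s with
  | nil => simp [biasCount]
  | cons a t ih =>
    simp only [biasCount, List.count_cons, beq_iff_eq]
    by_cases h1 : a = i
    · have h2 : a ≠ j := by rw [h1]; exact hij
      simp [h1, h2, hij, Ne.symm hij]
      linarith [ih]
    · by_cases h2 : a = j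
      · simp [h1, h2, hij, Ne.symm hij]
        linarith [ih]
      · simp [h1, h2]
        linarith [ih]

end NeuralSeq

open NeuralSeq in
/-- if `k` spikes exactly once, then
`b_ik (1 - b_jk) ≤ b_ij ≤ 1 - b_jk (1 - b_ik)`. -/
theorem probBias_single_spike_bounds {n : ℕ} (s : List (Fin n)) (i j k : Fin n)
    (hij : i ≠ j) (hjk : j ≠ k) (hik : i ≠ k)
    (hi : 0 < s.count i) (hj : 0 < s.count j) (hk : s.count k = 1) :
    probBias s i k * (1 - probBias s j k) ≤ probBias s i j ∧
      probBias s i j ≤ 1 - probBias s j k * (1 - probBias s i k) := by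
  have hks : k ∈ s := by
    rw [← List.count_pos_iff]; omega
  obtain ⟨u, v, rfl⟩ := List.append_of_mem hks
  have hcu : u.count k = 0 ∧ v.count k = 0 := by
    have := hk
    simp [List.count_append, List.count_cons] at this
    omega
  set au := u.count i with hau
  set av := v.count i with hav
  set bu := u.count j with hbu
  set bv := v.count j with hbv
  have hci : (u ++ k :: v).count i = au + av := by
    simp [List.count_append, List.count_cons, Ne.symm hik]; rfl
  have hcj : (u ++ k :: v).count j = bu + bv := by
    simp [List.count_append, List.count_cons, Ne.symm hjk]; rfl
  have hckv : (k :: v).count k = 1 := by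
    simp [List.count_cons, hcu.2]
  have hcik : biasCount (u ++ k :: v) i k = au := by
    rw [biasCount_append, biasCount_zero_of_count u i k hcu.1, hckv]
    have : biasCount (k :: v) i k = 0 := by
      simp [biasCount, hik, Ne.symm hik, biasCount_zero_of_count v i k hcu.2, hcu.2]
    simp [this]; rfl
  have hcjk : biasCount (u ++ k :: v) j k = bu := by
    rw [biasCount_append, biasCount_zero_of_count u j k hcu.1, hckv]
    have : biasCount (k :: v) j k = 0 := by
      simp [biasCount, hjk, Ne.symm hjk, biasCount_zero_of_count v j k hcu.2, hcu.2]
    simp [this]; rfl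
  have hlow : au * bv ≤ biasCount (u ++ k :: v) i j := by
    rw [biasCount_append]
    have : (k :: v).count j = bv := by
      simp [List.count_cons, Ne.symm hjk]; rfl
    rw [this, ← hau]
    exact Nat.le_add_left _ _
  have hlow' : bu * av ≤ biasCount (u ++ k :: v) j i := by
    rw [biasCount_append]
    have : (k :: v).count i = av := by
      simp [List.count_cons, Ne.symm hik]; rfl
    rw [this, ← hbu]
    exact Nat.le_add_left _ _
  have hsum : biasCount (u ++ k :: v) i j + biasCount (u ++ k :: v) j i
      = (au + av) * (bu + bv) := by
    rw [biasCount_add_symm _ _ _ hij, hci, hcj]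
  set C := biasCount (u ++ k :: v) i j with hC
  have hupp : C + bu * av ≤ (au + av) * (bu + bv) := by linarith [hsum, hlow']
  -- pass to reals
  have hA : (0 : ℝ) < (au + av : ℕ) := by
    rw [hci] at hi; exact_mod_cast hi
  have hB : (0 : ℝ) < (bu + bv : ℕ) := by
    rw [hcj] at hj; exact_mod_cast hj
  have hik' : probBias (u ++ k :: v) i k = (au : ℝ) / ((au + av : ℕ) : ℝ) := by
    unfold probBias
    rw [hcik, hci, hk]
    push_cast
    ring
  have hjk' : probBias (u ++ k :: v) j k = (bu : ℝ) / ((bu + bv : ℕ) : ℝ) := by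
    unfold probBias
    rw [hcjk, hcj, hk]
    push_cast
    ring
  have hij' : probBias (u ++ k :: v) i j = (C : ℝ) / (((au + av : ℕ) : ℝ) * ((bu + bv : ℕ) : ℝ)) := by
    unfold probBias
    rw [hci, hcj]
  have hlowR : (au : ℝ) * bv ≤ (C : ℝ) := by exact_mod_cast hlow
  have huppR : (C : ℝ) + (bu : ℝ) * av ≤ ((au + av : ℕ) : ℝ) * ((bu + bv : ℕ) : ℝ) := by
    exact_mod_cast hupp
  have hauR : (au : ℝ) + av = ((au + av : ℕ) : ℝ) := by push_cast; ring
  have hbuR : (bu : ℝ) + bv = ((bu + bv : ℕ) : ℝ) := by push_cast; ring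
  rw [hik', hjk', hij']
  set A := ((au + av : ℕ) : ℝ)
  set B := ((bu + bv : ℕ) : ℝ)
  constructor
  · have e1 : (au : ℝ)/A * (1 - (bu : ℝ)/B) = ((au : ℝ)*(B - bu))/(A*B) := by
      field_simp
    rw [e1, div_le_div_iff_of_pos_right (by positivity)]
    have : (au : ℝ)*(B - bu) = au*bv := by rw [← hbuR]; ring
    linarith [hlowR]
  · have e2 : 1 - (bu : ℝ)/B * (1 - (au : ℝ)/A) = (A*B - (bu : ℝ)*(A - au))/(A*B) := by
      field_simp
    rw [e2, div_le_div_iff_of_pos_right (by positivity)]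
    have : (bu : ℝ)*(A - au) = bu*av := by rw [← hauR]; ring
    linarith [huppR]
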